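/- Let (X,d) be a proper metric space and φ: X → ℝ a locally Lipschitz c-concave function (c = d²/2). Then for every x ∈ X the set ∂^c φ(x) is nonempty; more precisely, any sequence (y_n) with φ(x) = lim_n (d²(x,y_n)/2 - φ^c(y_n)) is bounded, and any limit point belongs to ∂^c φ(x). -/

import Mathlib

open Filter

private lemma midpoint_iter {X : Type*} [MetricSpace X]
    (hgeo : ∀ x y : X, ∃ z : X, dist x z = dist x y / 2 ∧ dist z y = dist x y / 2) :
    ∀ (k : ℕ) (x y : X), ∃ z : X, dist x z = dist x y / 2 ^ k ∧
      dist z y = dist x y - dist x y / 2 ^ k := by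
  intro k
  induction k with
  | zero => intro x y; exact ⟨y, by simp⟩
  | succ k ih =>
    intro x y
    obtain ⟨z, hz1, hz2⟩ := ih x y
    obtain ⟨m, hm1, hm2⟩ := hgeo x z
    refine ⟨m, ?_, ?_⟩
    · rw [hm1, hz1]; ring
    · have h1 : dist m y ≤ dist m z + dist z y := dist_triangle m z y
      have h2 : dist x y ≤ dist x m + dist m y := dist_triangle x m y
      have hd : (0:ℝ) ≤ dist x y := dist_nonneg
      rw [hm1, hz1] at h2
      rw [hm2, hz1, hz2] at h1
      have e : dist x m = dist x y / 2 ^ (k+1) := by rw [hm1, hz1]; ring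
      have : dist m y ≤ dist x y - dist x y / 2 ^ (k+1) := by
        rw [pow_succ] at *; linarith
      have : dist x y - dist x y / 2 ^ (k+1) ≤ dist m y := by
        rw [pow_succ] at *; linarith
      linarith [h1, h2]

/-- In a proper geodesic space, a locally Lipschitz `c`-concave function `φ` has nonempty
`c`-superdifferential at every point; moreover, any minimizing sequence `(y_n)` for
`φ(x) = inf_y (d²(x,y)/2 - φ^c(y))` is bounded, and any of its cluster points belongs
to `∂^c φ(x)`. -/
theorem stmt_15 {X : Type*} [MetricSpace X] [ProperSpace X]
    (hgeo : ∀ x y : X, ∃ z : X, dist x z = dist x y / 2 ∧ dist z y = dist x y / 2)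
    (φ φc : X → ℝ) (hlip : LocallyLipschitz φ)
    (hφc : ∀ y : X, IsGLB (Set.range fun x : X => dist x y ^ 2 / 2 - φ x) (φc y))
    (hφ : ∀ x : X, IsGLB (Set.range fun y : X => dist x y ^ 2 / 2 - φc y) (φ x)) :
    ∀ x : X, (∃ y : X, φ x + φc y = dist x y ^ 2 / 2) ∧
      ∀ y : ℕ → X,
        Filter.Tendsto (fun n => dist x (y n) ^ 2 / 2 - φc (y n)) Filter.atTop (nhds (φ x)) →
        (∃ C : ℝ, ∀ n, dist x (y n) ≤ C) ∧
        (∀ p : X, MapClusterPt p Filter.atTop y → φ x + φc p = dist x p ^ 2 / 2) := by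
  intro x
  have key : ∀ y : ℕ → X,
      Filter.Tendsto (fun n => dist x (y n) ^ 2 / 2 - φc (y n)) Filter.atTop (nhds (φ x)) →
      (∃ C : ℝ, ∀ n, dist x (y n) ≤ C) ∧
      (∀ p : X, MapClusterPt p Filter.atTop y → φ x + φc p = dist x p ^ 2 / 2) := by
    intro y htend
    constructor
    · -- boundedness
      obtain ⟨K, t, ht, hK⟩ := hlip x
      obtain ⟨r, hr, hball⟩ := Metric.mem_nhds_iff.mp ht
      obtain ⟨B, hB⟩ : ∃ B : ℝ, ∀ n, dist x (y n) ^ 2 / 2 - φc (y n) ≤ B := by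
        obtain ⟨B, hB⟩ := htend.bddAbove_range
        exact ⟨B, fun n => hB (Set.mem_range_self n)⟩
      refine ⟨max r (r + 2 * (B - φ x) / r + 2 * K), fun n => ?_⟩
      rcases le_or_gt (dist x (y n)) r with h | h
      · exact le_max_of_le_left h
      · set d := dist x (y n) with hd
        have hrd : 1 ≤ d / r := (one_le_div hr).mpr h.le
        obtain ⟨k, hk1, hk2⟩ := exists_nat_pow_near hrd one_lt_two
        obtain ⟨z, hz1, hz2⟩ := midpoint_iter hgeo (k+1) x (y n)
        set s : ℝ := d / 2 ^ (k+1) with hs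
        have hpk : (0:ℝ) < 2 ^ (k+1) := by positivity
        have hsr : s < r := by
          have h2 : d < 2 ^ (k+1) * r := by
            have := (div_lt_iff₀ hr).mp hk2
            nlinarith
          rw [hs, div_lt_iff₀ hpk]
          nlinarith
        have hrs : r / 2 ≤ s := by
          rw [hs, le_div_iff₀ hpk, pow_succ]
          have : r * 2 ^ k ≤ d := by
            have := (le_div_iff₀ hr).mp hk1
            linarith [this]
          linarith
        have hspos : 0 < s := lt_of_lt_of_le (by linarith) hrs
        have hzball : z ∈ Metric.ball x r := by
          rw [Metric.mem_ball, dist_comm, hz1]; exact hsr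
        have hxball : x ∈ Metric.ball x r := Metric.mem_ball_self hr
        have hlipz : |φ x - φ z| ≤ K * dist x z := by
          have := hK.dist_le_mul x (hball hxball) z (hball hzball)
          simpa [Real.dist_eq] using this
        have h1 : φ z ≤ dist z (y n) ^ 2 / 2 - φc (y n) :=
          (hφ z).1 ⟨y n, rfl⟩
        have h3 : d ^ 2 / 2 - φc (y n) ≤ B := hB n
        rw [hz2] at h1
        rw [hz1] at hlipz
        have habs : φ x - φ z ≤ K * s := (abs_le.mp hlipz).2
        have hKnn : (0:ℝ) ≤ K := K.coe_nonneg
        -- φ x - K s ≤ φ z ≤ (d - s)^2/2 - φc(y n) ≤ (d-s)^2/2 - d^2/2 + B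
        have hds : d * s ≤ s ^ 2 / 2 + B - φ x + K * s := by nlinarith
        have : d * (r / 2) ≤ d * s := by nlinarith
        have hE : d * r ≤ (r + 2 * (B - φ x) / r + 2 * (K:ℝ)) * r := by
          have heq : (r + 2 * (B - φ x) / r + 2 * (K:ℝ)) * r
              = r ^ 2 + 2 * (B - φ x) + 2 * (K:ℝ) * r := by field_simp
          rw [heq]; nlinarith
        exact le_max_of_le_right (le_of_mul_le_mul_right hE hr)
    · -- cluster points
      intro p hp
      obtain ⟨ψ, hψ, hψt⟩ := TopologicalSpace.FirstCountableTopology.tendsto_subseq hp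
      have hle : φ x ≤ dist x p ^ 2 / 2 - φc p := (hφ x).1 ⟨p, rfl⟩
      have hge : dist x p ^ 2 / 2 - φ x ≤ φc p := by
        apply (hφc p).2
        rintro _ ⟨z, rfl⟩
        -- show dist x p^2/2 - φ x ≤ dist z p^2/2 - φ z
        have hl1 : Tendsto (fun n => dist x (y (ψ n)) ^ 2 / 2 - φc (y (ψ n))) atTop (nhds (φ x)) :=
          htend.comp hψ.tendsto_atTop
        have hl2 : Tendsto (fun n => dist x (y (ψ n)) ^ 2 / 2 - dist z (y (ψ n)) ^ 2 / 2 + φ z)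
            atTop (nhds (dist x p ^ 2 / 2 - dist z p ^ 2 / 2 + φ z)) := by
          have hd1 : Tendsto (fun n => dist x (y (ψ n))) atTop (nhds (dist x p)) :=
            (Continuous.tendsto (continuous_const.dist continuous_id) p).comp hψt
          have hd2 : Tendsto (fun n => dist z (y (ψ n))) atTop (nhds (dist z p)) :=
            (Continuous.tendsto (continuous_const.dist continuous_id) p).comp hψt
          exact (((hd1.pow 2).div_const 2).sub ((hd2.pow 2).div_const 2)).add tendsto_const_nhds
        have hev : ∀ n, dist x (y (ψ n)) ^ 2 / 2 - dist z (y (ψ n)) ^ 2 / 2 + φ z ≤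
            dist x (y (ψ n)) ^ 2 / 2 - φc (y (ψ n)) := by
          intro n
          have := (hφc (y (ψ n))).1 ⟨z, rfl⟩
          simp only at this
          linarith
        have := le_of_tendsto_of_tendsto hl2 hl1 (Filter.Eventually.of_forall hev)
        linarith
      linarith
  refine ⟨?_, key⟩
  -- existence of minimizer via minimizing sequence
  have hexists : ∀ n : ℕ, ∃ yn : X,
      φ x ≤ dist x yn ^ 2 / 2 - φc yn ∧ dist x yn ^ 2 / 2 - φc yn < φ x + 1 / (n + 1) := by
    intro n
    have hlt : φ x < φ x + 1 / (n + 1 : ℝ) := by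
      have : (0:ℝ) < 1 / (n + 1) := by positivity
      linarith
    obtain ⟨c, hc, hc1, hc2⟩ := (hφ x).exists_between hlt
    obtain ⟨yn, rfl⟩ := hc
    exact ⟨yn, hc1, hc2⟩
  choose y hy1 hy2 using hexists
  have htend : Tendsto (fun n => dist x (y n) ^ 2 / 2 - φc (y n)) atTop (nhds (φ x)) := by
    have hupper : Tendsto (fun n : ℕ => φ x + 1 / (n + 1 : ℝ)) atTop (nhds (φ x)) := by
      have := tendsto_one_div_add_atTop_nhds_zero_nat (𝕜 := ℝ)
      simpa using (tendsto_const_nhds.add this)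
    exact tendsto_of_tendsto_of_tendsto_of_le_of_le tendsto_const_nhds hupper hy1
      (fun n => (hy2 n).le)
  obtain ⟨C, hC⟩ := (key y htend).1
  have hcpt : IsCompact (Metric.closedBall x C) := isCompact_closedBall x C
  have hmem : Filter.map y atTop ≤ Filter.principal (Metric.closedBall x C) :=
    Filter.le_principal_iff.mpr (Filter.mem_map.mpr (Filter.univ_mem' fun n => by
      simpa [Metric.mem_closedBall, dist_comm] using hC n))
  obtain ⟨p, _, hp⟩ := hcpt.exists_mapClusterPt hmem
  exact ⟨p, (key y htend).2 p hp⟩
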